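/- arXiv:2007.09803 — 6 statements merged into one kernel-verified Lean document; each statement's English description precedes it below -/
import Mathlib

section
/- Let a : ℕ → ℤ satisfy a(p) ≡ p+1 (mod ℓ) for a prime p and a prime ℓ ∈ {3,5}, and a(p^m) = a(p)·a(p^{m−1}) − p·a(p^{m−2}). If d is odd, ℓ_1 is an odd prime with ℓ_1 ≡ −1 (mod ℓ), and a(p^{d−1}) = ℓ_1, then p ≡ 1 (mod ℓ) and d ≡ −1 (mod ℓ). -/
private lemma aux_main (ℓ : ℕ) (hℓ : ℓ = 3 ∨ ℓ = 5) (q : ZMod ℓ) (d k : ℕ)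
    (hk : d = 2 * k + 1) (hsum : ∑ i ∈ Finset.range d, q ^ i = -1) :
    q = 1 ∧ (d : ZMod ℓ) = -1 := by
  by_cases hq1 : q = 1
  · subst hq1
    refine ⟨rfl, ?_⟩
    simpa using hsum
  · exfalso
    have hgeo : q ^ d = 2 - q := by
      have h := geom_sum_mul q d
      rw [hsum] at h
      linear_combination -h
    by_cases hq0 : q = 0
    · subst hq0
      rw [zero_pow (by omega)] at hgeo
      revert hgeo
      rcases hℓ with rfl | rfl <;> decide
    · have hsq : q ^ 2 = 1 ∨ q ^ 2 = -1 := by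
        clear hsum hgeo hq1 hk
        rcases hℓ with rfl | rfl <;> revert hq0 <;> revert q <;> decide
      have hqd : q ^ d = q ∨ q ^ d = -q := by
        rw [hk, pow_add, pow_mul, pow_one]
        rcases hsq with h | h
        · left; rw [h, one_pow, one_mul]
        · rw [h]
          rcases Nat.even_or_odd k with hk2 | hk2
          · left; rw [hk2.neg_one_pow, one_mul]
          · right; rw [hk2.neg_one_pow, neg_one_mul]
      rw [hgeo] at hqd
      clear hsum hgeo hsq hk
      revert hqd hq1 hq0
      rcases hℓ with rfl | rfl <;> revert q <;> decide

/-- Let `a : ℕ → ℤ` satisfy `a p ≡ p + 1 (mod ℓ)` for a prime `p` and a prime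
`ℓ ∈ {3, 5}`, with `a 1 = 1` and
`a (p^m) = a p · a (p^(m-1)) - p · a (p^(m-2))` for `m ≥ 2`.  If `d` is odd,
`ℓ₁` is an odd prime with `ℓ₁ ≡ -1 (mod ℓ)`, and `a (p^(d-1)) = ℓ₁`, then
`p ≡ 1 (mod ℓ)` and `d ≡ -1 (mod ℓ)`. -/
theorem stmt_3 (a : ℕ → ℤ) (p ℓ : ℕ) (hp : p.Prime) (hℓ : ℓ = 3 ∨ ℓ = 5)
    (h1 : a 1 = 1)
    (hap : a p ≡ (p : ℤ) + 1 [ZMOD ℓ])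
    (hrec : ∀ m : ℕ, 2 ≤ m → a (p ^ m) = a p * a (p ^ (m - 1)) - (p : ℤ) * a (p ^ (m - 2)))
    (d : ℕ) (hd : Odd d) (ℓ₁ : ℕ) (hℓ₁ : ℓ₁.Prime) (hℓ₁odd : Odd ℓ₁)
    (hℓ₁mod : (ℓ₁ : ℤ) ≡ -1 [ZMOD ℓ])
    (hval : a (p ^ (d - 1)) = (ℓ₁ : ℤ)) :
    (p : ℤ) ≡ 1 [ZMOD ℓ] ∧ (d : ℤ) ≡ -1 [ZMOD ℓ] := by
  rw [← ZMod.intCast_eq_intCast_iff] at hap hℓ₁mod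
  have hapz : ((a p : ZMod ℓ)) = (p : ZMod ℓ) + 1 := by
    rw [hap]; push_cast; ring
  have hl1z : ((ℓ₁ : ℤ) : ZMod ℓ) = -1 := by rw [hℓ₁mod]; push_cast; ring
  have key : ∀ m : ℕ, ((a (p ^ m) : ZMod ℓ)) = ∑ i ∈ Finset.range (m + 1), (p : ZMod ℓ) ^ i := by
    intro m
    induction m using Nat.twoStepInduction with
    | zero => simp [h1]
    | one => simpa [Finset.sum_range_succ, add_comm] using hapz
    | more n ih1 ih2 =>
      have hr := hrec (n + 2) (by omega)
      simp only [show n + 2 - 1 = n + 1 from rfl, show n + 2 - 2 = n from rfl] at hr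
      have hcast : ((a (p ^ (n + 2)) : ZMod ℓ)) =
          ((p : ZMod ℓ) + 1) * (∑ i ∈ Finset.range (n + 1 + 1), (p : ZMod ℓ) ^ i)
            - (p : ZMod ℓ) * (∑ i ∈ Finset.range (n + 1), (p : ZMod ℓ) ^ i) := by
        rw [hr]; push_cast [ih1, ih2, hapz]; ring
      rw [hcast]
      simp only [Finset.sum_range_succ]
      ring
  have hd1 : 1 ≤ d := hd.pos
  have hsum : ∑ i ∈ Finset.range d, (p : ZMod ℓ) ^ i = -1 := by
    have h := key (d - 1)
    rw [hval, hl1z, show d - 1 + 1 = d by omega] at h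
    exact h.symm
  obtain ⟨k, hk⟩ := hd
  have main := aux_main ℓ hℓ (p : ZMod ℓ) d k hk hsum
  constructor
  · rw [← ZMod.intCast_eq_intCast_iff]; push_cast; exact main.1
  · rw [← ZMod.intCast_eq_intCast_iff]; push_cast; exact main.2
end

section
/- The only integer solutions (x, y) of y^4 − 3x^2y^2 + x^4 = 5 are (x, y) ∈ {(1, −2), (−1, −2), (2, −1), (−2, −1), (2, 1), (−2, 1), (1, 2), (−1, 2)}. -/
/-- The only integer solutions `(x, y)` of `y⁴ - 3x²y² + x⁴ = 5` are
`(±1, ±2)` and `(±2, ±1)` (all sign combinations). -/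
theorem stmt_7 (x y : ℤ) :
    y ^ 4 - 3 * x ^ 2 * y ^ 2 + x ^ 4 = 5 ↔
      (x, y) ∈ ({(1, -2), (-1, -2), (2, -1), (-2, -1),
                 (2, 1), (-2, 1), (1, 2), (-1, 2)} : Set (ℤ × ℤ)) := by
  constructor
  · intro h
    have h1 : (y^2 - x*y - x^2) * (y^2 + x*y - x^2) = 5 := by linear_combination h
    have ha : (y^2 - x*y - x^2) ∣ 5 := ⟨y^2 + x*y - x^2, h1.symm⟩
    have hb : (y^2 + x*y - x^2) ∣ 5 := ⟨y^2 - x*y - x^2, by linear_combination -h1⟩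
    have ha1 : y^2 - x*y - x^2 ≤ 5 := Int.le_of_dvd (by norm_num) ha
    have ha2 : -(y^2 - x*y - x^2) ≤ 5 := Int.le_of_dvd (by norm_num) (neg_dvd.mpr ha)
    have hb1 : y^2 + x*y - x^2 ≤ 5 := Int.le_of_dvd (by norm_num) hb
    have hb2 : -(y^2 + x*y - x^2) ≤ 5 := Int.le_of_dvd (by norm_num) (neg_dvd.mpr hb)
    have hy : y ≠ 0 := by
      rintro rfl
      have h5 : x^2 * x^2 = 5 := by linear_combination h
      have h2 : x^2 ≤ 2 := by nlinarith [sq_nonneg (x^2 - 2)]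
      nlinarith [sq_nonneg x]
    have hx : x ≠ 0 := by
      rintro rfl
      have h5 : y^2 * y^2 = 5 := by linear_combination h
      have h2 : y^2 ≤ 2 := by nlinarith [sq_nonneg (y^2 - 2)]
      nlinarith [sq_nonneg y]
    have hy0 : 0 < y^2 := by positivity
    have hx0 : 0 < x^2 := by positivity
    have hy1 : 1 ≤ y^2 := Int.lt_iff_add_one_le.mp hy0
    have hx1 : 1 ≤ x^2 := Int.lt_iff_add_one_le.mp hx0
    have hxy1 : -5 ≤ x*y := by linarith
    have hxy2 : x*y ≤ 5 := by linarith
    have hx25 : x^2 ≤ 25 := by nlinarith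
    have hy25 : y^2 ≤ 25 := by nlinarith
    have hx5l : -5 ≤ x := by nlinarith [sq_nonneg (x+5)]
    have hx5r : x ≤ 5 := by nlinarith [sq_nonneg (x-5)]
    have hy5l : -5 ≤ y := by nlinarith [sq_nonneg (y+5)]
    have hy5r : y ≤ 5 := by nlinarith [sq_nonneg (y-5)]
    clear ha hb h1 ha1 ha2 hb1 hb2 hy hx hy0 hx0 hy1 hx1 hxy1 hxy2 hx25 hy25
    simp only [Set.mem_insert_iff, Set.mem_singleton_iff, Prod.mk.injEq]
    interval_cases x <;> interval_cases y <;> omega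
  · intro h
    simp only [Set.mem_insert_iff, Set.mem_singleton_iff, Prod.mk.injEq] at h
    rcases h with ⟨rfl, rfl⟩|⟨rfl, rfl⟩|⟨rfl, rfl⟩|⟨rfl, rfl⟩|⟨rfl, rfl⟩|⟨rfl, rfl⟩|⟨rfl, rfl⟩|⟨rfl, rfl⟩ <;> norm_num
end

section
/- The equation y^4 − 3x^2y^2 + x^4 = ℓ has no integer solutions for ℓ ∈ {11, 19, 29, 41, 59, 61, 71, 79, 89}. -/
/-- Key reduction: if the quartic equals a prime `ℓ`, then
`(2(x²+y²))² = (ℓ+1)² + 4(ℓ-1)²`. -/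
lemma stmt_8_aux (ℓ : ℤ) (hp : Prime ℓ) (x y : ℤ)
    (h : (y ^ 2 - x * y - x ^ 2) * (y ^ 2 + x * y - x ^ 2) = ℓ) :
    ∃ s : ℤ, 0 ≤ s ∧ s ^ 2 = (ℓ + 1) ^ 2 + 4 * (ℓ - 1) ^ 2 := by
  refine ⟨2 * (x ^ 2 + y ^ 2), by positivity, ?_⟩
  rcases hp.irreducible.isUnit_or_isUnit h.symm with hu | hu <;>
    rcases Int.isUnit_iff.mp hu with ha | ha
  · -- y² - xy - x² = 1, so other factor = ℓ
    have hb : y ^ 2 + x * y - x ^ 2 = ℓ := by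
      rw [ha, one_mul] at h; exact h
    linear_combination (2*(y^2-x^2)+ℓ+1 - (8*x*y+4*ℓ-4)) * ha + (2*(y^2-x^2)+ℓ+1 + (8*x*y+4*ℓ-4)) * hb
  · -- y² - xy - x² = -1, other factor = -ℓ
    have hb : y ^ 2 + x * y - x ^ 2 = -ℓ := by
      rw [ha] at h; linarith [h]
    linear_combination (2*(y^2-x^2)-(ℓ+1) - (8*x*y-4*ℓ+4)) * ha + (2*(y^2-x^2)-(ℓ+1) + (8*x*y-4*ℓ+4)) * hb
  · -- y² + xy - x² = 1, other factor = ℓ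
    have hb : y ^ 2 - x * y - x ^ 2 = ℓ := by
      rw [ha, mul_one] at h; exact h
    linear_combination (2*(y^2-x^2)+ℓ+1 - (8*x*y-4*ℓ+4)) * hb + (2*(y^2-x^2)+ℓ+1 + (8*x*y-4*ℓ+4)) * ha
  · -- y² + xy - x² = -1, other factor = -ℓ
    have hb : y ^ 2 - x * y - x ^ 2 = -ℓ := by
      rw [ha] at h; linarith [h]
    linear_combination (2*(y^2-x^2)-(ℓ+1) - (8*x*y+4*ℓ-4)) * hb + (2*(y^2-x^2)-(ℓ+1) + (8*x*y+4*ℓ-4)) * ha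

/-- The equation `y⁴ - 3x²y² + x⁴ = ℓ` has no integer solutions for
`ℓ ∈ {11, 19, 29, 41, 59, 61, 71, 79, 89}`. -/
theorem stmt_8 (ℓ : ℤ) (hℓ : ℓ ∈ ({11, 19, 29, 41, 59, 61, 71, 79, 89} : Set ℤ)) :
    ∀ x y : ℤ, y ^ 4 - 3 * x ^ 2 * y ^ 2 + x ^ 4 ≠ ℓ := by
  intro x y h
  have hab : (y ^ 2 - x * y - x ^ 2) * (y ^ 2 + x * y - x ^ 2) = ℓ := by
    linear_combination h
  simp only [Set.mem_insert_iff, Set.mem_singleton_iff] at hℓ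
  rcases hℓ with rfl | rfl | rfl | rfl | rfl | rfl | rfl | rfl | rfl
  · obtain ⟨s, hs0, hs⟩ := stmt_8_aux _ (by norm_num) x y hab
    norm_num at hs
    rcases le_or_gt s 23 with h' | h' <;> nlinarith
  · obtain ⟨s, hs0, hs⟩ := stmt_8_aux _ (by norm_num) x y hab
    norm_num at hs
    rcases le_or_gt s 41 with h' | h' <;> nlinarith
  · obtain ⟨s, hs0, hs⟩ := stmt_8_aux _ (by norm_num) x y hab
    norm_num at hs
    rcases le_or_gt s 63 with h' | h' <;> nlinarith
  · obtain ⟨s, hs0, hs⟩ := stmt_8_aux _ (by norm_num) x y hab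
    norm_num at hs
    rcases le_or_gt s 90 with h' | h' <;> nlinarith
  · obtain ⟨s, hs0, hs⟩ := stmt_8_aux _ (by norm_num) x y hab
    norm_num at hs
    rcases le_or_gt s 130 with h' | h' <;> nlinarith
  · obtain ⟨s, hs0, hs⟩ := stmt_8_aux _ (by norm_num) x y hab
    norm_num at hs
    rcases le_or_gt s 135 with h' | h' <;> nlinarith
  · obtain ⟨s, hs0, hs⟩ := stmt_8_aux _ (by norm_num) x y hab
    norm_num at hs
    rcases le_or_gt s 157 with h' | h' <;> nlinarith
  · obtain ⟨s, hs0, hs⟩ := stmt_8_aux _ (by norm_num) x y hab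
    norm_num at hs
    rcases le_or_gt s 175 with h' | h' <;> nlinarith
  · obtain ⟨s, hs0, hs⟩ := stmt_8_aux _ (by norm_num) x y hab
    norm_num at hs
    rcases le_or_gt s 197 with h' | h' <;> nlinarith
end

section
/- The only integer solutions (x, y) of y^4 − 3x^2y^2 + x^4 = −11 are (x, y) with {|x|, |y|} = {2, 3}, namely (±2, ±3) and (±3, ±2) in all sign combinations. -/
private lemma divisors11 (a b : ℤ) (h : a * b = -11) :
    (a = 1 ∧ b = -11) ∨ (a = -1 ∧ b = 11) ∨ (a = 11 ∧ b = -1) ∨ (a = -11 ∧ b = 1) := by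
  have h1 : a ∣ 11 := ⟨-b, by linarith⟩
  have habs : |a| ∣ 11 := (abs_dvd _ _).2 h1
  have hle : |a| ≤ 11 := Int.le_of_dvd (by norm_num) habs
  have h2 : -11 ≤ a ∧ a ≤ 11 := abs_le.mp hle
  obtain ⟨hl, hr⟩ := h2
  interval_cases a <;> omega

private lemma sq_eq_four {x : ℤ} (h : x ^ 2 = 4) : |x| = 2 := by
  have h0 : (x - 2) * (x + 2) = 0 := by ring_nf; linarith
  rcases mul_eq_zero.mp h0 with h' | h' <;>
  · have : x = 2 ∨ x = -2 := by omega
    rcases this with rfl | rfl <;> decide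

private lemma sq_eq_nine {x : ℤ} (h : x ^ 2 = 9) : |x| = 3 := by
  have h0 : (x - 3) * (x + 3) = 0 := by ring_nf; linarith
  rcases mul_eq_zero.mp h0 with h' | h' <;>
  · have : x = 3 ∨ x = -3 := by omega
    rcases this with rfl | rfl <;> decide

private lemma solve_case {x y : ℤ} (h1 : x * y = 6 ∨ x * y = -6) (h2 : y ^ 2 - x ^ 2 = 5) :
    |x| = 2 ∧ |y| = 3 := by
  have hprod : x ^ 2 * y ^ 2 = 36 := by
    rcases h1 with h1 | h1 <;> nlinarith [h1]
  have hx4 : (x ^ 2 - 4) * (x ^ 2 + 9) = 0 := by nlinarith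
  have hx2 : x ^ 2 = 4 := by
    rcases mul_eq_zero.mp hx4 with h' | h'
    · linarith
    · nlinarith [sq_nonneg x]
  have hy2 : y ^ 2 = 9 := by linarith
  exact ⟨sq_eq_four hx2, sq_eq_nine hy2⟩

/-- The only integer solutions `(x, y)` of `y⁴ - 3x²y² + x⁴ = -11` are those
with `{|x|, |y|} = {2, 3}`, namely `(±2, ±3)` and `(±3, ±2)` in all sign
combinations. -/
theorem stmt_9 (x y : ℤ) :
    y ^ 4 - 3 * x ^ 2 * y ^ 2 + x ^ 4 = -11 ↔
      ((|x| = 2 ∧ |y| = 3) ∨ (|x| = 3 ∧ |y| = 2)) := by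
  constructor
  · intro h
    have hfac : (y ^ 2 - x * y - x ^ 2) * (y ^ 2 + x * y - x ^ 2) = -11 := by ring_nf; linarith [h]
    rcases divisors11 _ _ hfac with ⟨ha, hb⟩ | ⟨ha, hb⟩ | ⟨ha, hb⟩ | ⟨ha, hb⟩
    · -- xy = -6, x² - y² = 5
      have := solve_case (x := y) (y := x) (Or.inr (by linarith [mul_comm x y])) (by linarith)
      exact Or.inr ⟨this.2, this.1⟩
    · -- xy = 6, y² - x² = 5
      exact Or.inl (solve_case (Or.inl (by linarith)) (by linarith))
    · -- xy = -6, y² - x² = 5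
      exact Or.inl (solve_case (Or.inr (by linarith)) (by linarith))
    · -- xy = 6, x² - y² = 5
      have := solve_case (x := y) (y := x) (Or.inl (by linarith [mul_comm x y])) (by linarith)
      exact Or.inr ⟨this.2, this.1⟩
  · rintro (⟨hx, hy⟩ | ⟨hx, hy⟩) <;>
    · rcases abs_eq (by norm_num : (0:ℤ) ≤ _) |>.mp hx with rfl | rfl <;>
      rcases abs_eq (by norm_num : (0:ℤ) ≤ _) |>.mp hy with rfl | rfl <;> norm_num
end

section
/- The equation y^4 − 3xy^2 + x^2 = −61 has no integer solutions. -/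
/-- All solutions of `u² = 5 v² - 244` have `v ≡ 2, 3 (mod 4)`. -/
lemma pell_aux : ∀ v : ℕ, ∀ u : ℤ, u ^ 2 = 5 * (v : ℤ) ^ 2 - 244 →
    v % 4 = 2 ∨ v % 4 = 3 := by
  intro v
  induction v using Nat.strong_induction_on with
  | _ v ih =>
    intro u hu
    rcases le_or_gt v 15 with hv | hv
    · -- base cases
      have hv7 : (7 : ℤ) ≤ (v : ℤ) := by nlinarith [sq_nonneg u, Int.natCast_nonneg v]
      have hv7' : 7 ≤ v := by exact_mod_cast hv7
      have hub : u ≤ 30 ∧ -30 ≤ u := by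
        have hv15 : (v : ℤ) ≤ 15 := by exact_mod_cast hv
        constructor <;> nlinarith [Int.natCast_nonneg v]
      obtain ⟨hu1, hu2⟩ := hub
      interval_cases v
      · right; rfl
      · exfalso; push_cast at hu; interval_cases u <;> norm_num at hu
      · exfalso; push_cast at hu; interval_cases u <;> norm_num at hu
      · left; rfl
      · right; rfl
      · exfalso; push_cast at hu; interval_cases u <;> norm_num at hu
      · exfalso; push_cast at hu; interval_cases u <;> norm_num at hu
      · exfalso; push_cast at hu; interval_cases u <;> norm_num at hu
      · exfalso; push_cast at hu; interval_cases u <;> norm_num at hu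
    · -- descent
      have hv16 : (16 : ℤ) ≤ (v : ℤ) := by exact_mod_cast hv
      set w : ℤ := |u| with hwdef
      have hw : w ^ 2 = 5 * (v : ℤ) ^ 2 - 244 := by rw [hwdef, sq_abs]; exact hu
      have hw0 : 0 ≤ w := abs_nonneg u
      have h2v : 2 * (v : ℤ) < w := by nlinarith
      have h9v : 4 * w ≤ 9 * (v : ℤ) := by nlinarith
      have hnn : 0 ≤ 9 * (v : ℤ) - 4 * w := by linarith
      obtain ⟨v', hv'⟩ : ∃ v' : ℕ, (v' : ℤ) = 9 * (v : ℤ) - 4 * w :=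
        ⟨(9 * (v : ℤ) - 4 * w).toNat, Int.toNat_of_nonneg hnn⟩
      have hlt : v' < v := by
        have : (v' : ℤ) < (v : ℤ) := by omega
        exact_mod_cast this
      have heq : (9 * w - 20 * (v : ℤ)) ^ 2 = 5 * (v' : ℤ) ^ 2 - 244 := by
        rw [hv']; linear_combination hw
      have hrec := ih v' hlt (9 * w - 20 * (v : ℤ)) heq
      omega

/-- The equation `y⁴ - 3xy² + x² = -61` has no integer solutions. -/
theorem stmt_13 : ∀ x y : ℤ, y ^ 4 - 3 * x * y ^ 2 + x ^ 2 ≠ -61 := by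
  intro x y h
  obtain ⟨v, hv⟩ : ∃ v : ℕ, (v : ℤ) = y ^ 2 :=
    ⟨(y ^ 2).toNat, Int.toNat_of_nonneg (sq_nonneg y)⟩
  have key : (2 * x - 3 * y ^ 2) ^ 2 = 5 * (v : ℤ) ^ 2 - 244 := by
    rw [hv]; linear_combination 4 * h
  have h23 := pell_aux v (2 * x - 3 * y ^ 2) key
  have h01 : ∃ m : ℤ, (v : ℤ) = 4 * m ∨ (v : ℤ) = 4 * m + 1 := by
    rcases Int.even_or_odd y with ⟨k, hk⟩ | ⟨k, hk⟩
    · exact ⟨k ^ 2, Or.inl (by rw [hv, hk]; ring)⟩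
    · exact ⟨k ^ 2 + k, Or.inr (by rw [hv, hk]; ring)⟩
  obtain ⟨m, hm⟩ := h01
  omega
end

section
/- The only integer solutions (x, y) of y^4 − 3xy^2 + x^2 = 11 are (x, y) ∈ {(−2, 1), (−2, −1), (5, 1), (5, −1)}. -/
namespace Stmt14Aux

/-- "Fibonacci-like" sequence for the recurrence `u_{n+2} = 3u_{n+1} - u_n`. -/
def s : ℕ → ℤ
  | 0 => 0
  | 1 => 1
  | (n+2) => 3 * s (n+1) - s n

def A : ℕ → ℤ
  | 0 => 1
  | 1 => 5
  | (n+2) => 3 * A (n+1) - A n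

def B : ℕ → ℤ
  | 0 => 2
  | 1 => 7
  | (n+2) => 3 * B (n+1) - B n

def P : ℕ → ℤ
  | 0 => 3
  | 1 => 4
  | (n+2) => 3 * P (n+1) - P n

def Q : ℕ → ℤ
  | 0 => 4
  | 1 => 3
  | (n+2) => 3 * Q (n+1) - Q n

lemma two_step (p : ℕ → Prop) (h0 : p 0) (h1 : p 1)
    (hs : ∀ n, p n → p (n+1) → p (n+2)) : ∀ n, p n := by
  have key : ∀ n, p n ∧ p (n+1) := by
    intro n
    induction n with
    | zero => exact ⟨h0, h1⟩
    | succ k ih => exact ⟨ih.2, hs k ih.1 ih.2⟩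
  exact fun n => (key n).1

lemma srec (n : ℕ) : s (n+2) = 3 * s (n+1) - s n := rfl
lemma Arec (n : ℕ) : A (n+2) = 3 * A (n+1) - A n := rfl
lemma Brec (n : ℕ) : B (n+2) = 3 * B (n+1) - B n := rfl

lemma P_diff : ∀ n, P (n+1) - P n = A n := by
  apply two_step
  · norm_num [P, A]
  · norm_num [P, A]
  · intro n h1 h2
    show P (n+3) - P (n+2) = A (n+2)
    have h1' : P (n+1) - P n = A n := h1
    have h2' : P (n+2) - P (n+1) = A (n+1) := h2
    have e1 : P (n+3) = 3 * P (n+2) - P (n+1) := rfl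
    have e2 : P (n+2) = 3 * P (n+1) - P n := rfl
    have e3 : A (n+2) = 3 * A (n+1) - A n := rfl
    omega

lemma Q_diff : ∀ n, Q (n+2) - Q (n+1) = B n := by
  apply two_step
  · norm_num [Q, B]
  · norm_num [Q, B]
  · intro n h1 h2
    show Q (n+4) - Q (n+3) = B (n+2)
    have h1' : Q (n+2) - Q (n+1) = B n := h1
    have h2' : Q (n+3) - Q (n+2) = B (n+1) := h2
    have e1 : Q (n+4) = 3 * Q (n+3) - Q (n+2) := rfl
    have e2 : Q (n+3) = 3 * Q (n+2) - Q (n+1) := rfl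
    have e3 : B (n+2) = 3 * B (n+1) - B n := rfl
    omega

/-- Vieta jumping classification of the solutions of `a² - 3ab + b² = -11`
with `1 ≤ b ≤ a`. -/
lemma classify : ∀ (N : ℕ) (a b : ℤ), b.toNat ≤ N → 1 ≤ b → b ≤ a →
    a^2 - 3*a*b + b^2 = -11 →
    ∃ n, (a = P (n+1) ∧ b = P n) ∨ (a = Q (n+2) ∧ b = Q (n+1)) := by
  intro N
  induction N using Nat.strong_induction_on with
  | _ N ih =>
    intro a b hbN hb1 hba heq
    by_cases hb3 : b ≤ 3
    · interval_cases b
      · exfalso; nlinarith [sq_nonneg (2*a - 3)]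
      · exfalso; nlinarith [sq_nonneg (a - 3)]
      · have : (a - 4) * (a - 5) = 0 := by nlinarith
        rcases mul_eq_zero.mp this with h | h
        · refine ⟨0, Or.inl ⟨?_, rfl⟩⟩
          show a = P 1
          have e : P 1 = (4:ℤ) := rfl
          omega
        · refine ⟨0, Or.inr ⟨?_, rfl⟩⟩
          show a = Q 2
          have e : Q 2 = (5:ℤ) := rfl
          omega
    · push_neg at hb3
      set a' : ℤ := 3 * b - a with ha'
      have hkey : 2 * b < a := by
        rcases lt_or_ge (2*b) a with h | h
        · exact h
        · exfalso
          have hne : a ≠ 2 * b := by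
            intro h'; rw [h'] at heq; nlinarith
          have h2 : a ≤ 2*b - 1 := by omega
          nlinarith [mul_nonneg (sub_nonneg.mpr hba) (by linarith : (0:ℤ) ≤ 2*b - 1 - a)]
      have ha'1 : 1 ≤ a' := by
        nlinarith [sq_nonneg a]
      have ha'b : a' < b := by omega
      have heq' : b^2 - 3*b*a' + a'^2 = -11 := by ring_nf; nlinarith [heq]
      have hlt : a'.toNat < N := by omega
      obtain ⟨n, hc⟩ := ih a'.toNat hlt b a' le_rfl ha'1 (le_of_lt ha'b) heq'
      rcases hc with ⟨h1, h2⟩ | ⟨h1, h2⟩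
      · refine ⟨n+1, Or.inl ⟨?_, h1⟩⟩
        show a = P (n+2)
        have e : P (n+2) = 3 * P (n+1) - P n := rfl
        omega
      · refine ⟨n+1, Or.inr ⟨?_, h1⟩⟩
        show a = Q (n+3)
        have e : Q (n+3) = 3 * Q (n+2) - Q (n+1) := rfl
        omega

lemma mod_period {X : ℕ → ℤ} (hrec : ∀ n, X (n+2) = 3 * X (n+1) - X n) (M p : ℕ)
    (h0 : ((X p : ℤ) : ZMod M) = ((X 0 : ℤ) : ZMod M))
    (h1 : ((X (p+1) : ℤ) : ZMod M) = ((X 1 : ℤ) : ZMod M)) :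
    ∀ n, ((X (n + p) : ℤ) : ZMod M) = ((X n : ℤ) : ZMod M) := by
  apply two_step
  · simpa using h0
  · rw [Nat.add_comm]; exact h1
  · intro n ih1 ih2
    have e : n + 2 + p = (n + p) + 2 := by omega
    rw [e, hrec (n+p), hrec n]
    push_cast
    rw [show n + p + 1 = n + 1 + p from by omega, ih2, ih1]

lemma mod_red {X : ℕ → ℤ} {M p : ℕ} (hp : 0 < p)
    (hper : ∀ n, ((X (n + p) : ℤ) : ZMod M) = ((X n : ℤ) : ZMod M)) :
    ∀ n, ((X n : ℤ) : ZMod M) = ((X (n % p) : ℤ) : ZMod M) := by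
  intro n
  induction n using Nat.strong_induction_on with
  | _ n ih =>
    by_cases h : n < p
    · rw [Nat.mod_eq_of_lt h]
    · push_neg at h
      obtain ⟨m, rfl⟩ : ∃ m, n = m + p := ⟨n - p, by omega⟩
      rw [hper m, ih m (by omega), Nat.add_mod_right]

/-- `B n` is never a perfect square (mod 16 obstruction). -/
lemma B_not_sq (n : ℕ) (y : ℤ) : B n ≠ y ^ 2 := by
  intro h
  have hper := mod_period Brec 16 12 (by decide) (by decide)
  have h16 := mod_red (by norm_num) hper n
  have hy : ((y : ZMod 16)) ^ 2 = ((B (n % 12) : ℤ) : ZMod 16) := by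
    rw [← h16, h]
    push_cast
    ring
  have hlt : n % 12 < 12 := Nat.mod_lt _ (by norm_num)
  have key : ∀ t : ZMod 16, ∀ r : Fin 12, t ^ 2 ≠ ((B r.val : ℤ) : ZMod 16) := by decide
  exact key _ ⟨n % 12, hlt⟩ hy

lemma F1 : ∀ k n : ℕ, A (n + (k+1)) = s (k+1) * A (n+1) - s k * A n := by
  apply two_step (p := fun k => ∀ n, A (n + (k+1)) = s (k+1) * A (n+1) - s k * A n)
  · intro n; simp [s]
  · intro n
    have e1 : s 2 = 3 := rfl
    have e2 : s 1 = 1 := rfl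
    rw [show n + 2 = n + 1 + 1 from rfl]
    rw [Arec n, e1, e2]; ring
  · intro k ih1 ih2 n
    have e : n + (k + 3) = (n + (k+1)) + 2 := by omega
    rw [e, Arec (n + (k+1))]
    have e2 : n + (k + 2) = (n + (k+1)) + 1 := by omega
    rw [show n + (k+1) + 1 = n + (k+2) from by omega]
    rw [ih2 n, ih1 n, srec (k+1), srec k]
    ring

lemma F2 : ∀ k n : ℕ, A n = s (k+1) * A (n+k) - s k * A (n+k+1) := by
  intro k
  induction k with
  | zero => intro n; simp [s]
  | succ k ih =>
    intro n
    show A n = s (k+2) * A (n+k+1) - s (k+1) * A (n+k+2)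
    rw [srec k, Arec (n+k)]
    linear_combination ih n

lemma I (k n : ℕ) : A (n + 2*k + 2) + A n = (3 * s (k+1) - 2 * s k) * A (n + k + 1) := by
  have hF1 := F1 k (n + k + 1)
  rw [show n + k + 1 + (k+1) = n + 2*k + 2 from by omega] at hF1
  have hF2 := F2 k n
  have hr : A (n+k+2) = 3 * A (n+k+1) - A (n+k) := Arec (n+k)
  rw [show n + k + 1 + 1 = n + k + 2 from by omega] at hF1
  linear_combination hF1 + hF2 + s (k+1) * hr

lemma Iter (k : ℕ) : ∀ j n : ℕ,
    A (n + 2*(k+1)*j) ≡ (-1)^j * A n [ZMOD (3 * s (k+1) - 2 * s k)] := by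
  intro j
  induction j with
  | zero => intro n; simp [Int.ModEq]
  | succ j ih =>
    intro n
    have e : n + 2*(k+1)*(j+1) = (n + 2*(k+1)*j) + 2*k + 2 := by ring
    rw [e]
    have hI := I k (n + 2*(k+1)*j)
    have step : A ((n + 2*(k+1)*j) + 2*k + 2) ≡ -A (n + 2*(k+1)*j)
        [ZMOD (3 * s (k+1) - 2 * s k)] := by
      exact Int.ModEq.symm (Int.modEq_iff_dvd.mpr
        ⟨A ((n + 2*(k+1)*j) + k + 1), by linarith⟩)
    calc A ((n + 2*(k+1)*j) + 2*k + 2) ≡ -A (n + 2*(k+1)*j) [ZMOD _] := step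
      _ ≡ -((-1)^j * A n) [ZMOD _] := (ih n).neg
      _ = (-1)^(j+1) * A n := by ring

lemma s_pos : ∀ n : ℕ, 0 ≤ s n ∧ s n < s (n+1) := by
  apply two_step
  · norm_num [s]
  · norm_num [s]
  · intro n ⟨h1, h2⟩ ⟨h2', h3⟩
    refine ⟨by linarith, ?_⟩
    rw [srec (n+1), srec n]
    linarith

lemma s_mod4 : ∀ n : ℕ, ((s n : ℤ) : ZMod 4) = ((s (n % 3) : ℤ) : ZMod 4) :=
  mod_red (by norm_num) (mod_period srec 4 3 (by decide) (by decide))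

lemma nat_prime_3mod4 : ∀ N : ℕ, N % 4 = 3 → ∃ p, Nat.Prime p ∧ p ∣ N ∧ p % 4 = 3 := by
  intro N
  induction N using Nat.strong_induction_on with
  | _ N ih =>
    intro hN
    have hN1 : N ≠ 1 := by omega
    have hN0 : N ≠ 0 := by omega
    set p := N.minFac with hp
    have hpp : p.Prime := Nat.minFac_prime hN1
    have hpd : p ∣ N := Nat.minFac_dvd N
    have hodd : p ≠ 2 := by
      intro h2
      have : (2:ℕ) ∣ N := h2 ▸ hpd
      omega
    have hp14 : p % 4 = 1 ∨ p % 4 = 3 := by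
      have h2 := hpp.two_le
      have hp2 : p % 2 = 1 := by
        by_cases h : 2 ∣ p
        · rcases hpp.eq_one_or_self_of_dvd 2 h with h' | h' <;> omega
        · omega
      omega
    rcases hp14 with h1 | h3
    · obtain ⟨t, ht⟩ := hpd
      have ht4 : t % 4 = 3 := by
        have := Nat.mul_mod p t 4
        rw [← ht, hN, h1] at this
        omega
      have htN : t < N := by
        have h2 : 2 ≤ p := hpp.two_le
        have ht0 : t ≠ 0 := by rintro rfl; simp at ht; omega
        calc t < p * t := by nlinarith [Nat.pos_of_ne_zero ht0]
          _ = N := ht.symm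
      obtain ⟨q, hq, hqd, hq4⟩ := ih t htN ht4
      exact ⟨q, hq, hqd.trans ⟨p, by rw [ht]; ring⟩, hq4⟩
    · exact ⟨p, hpp, hpd, h3⟩

/-- Cohn-style argument: `A n` is not a square for even `n > 0`. -/
lemma A_even_not_sq (a m : ℕ) (hm : m % 2 = 1) (y : ℤ) : A (2 * 2^a * m) ≠ y^2 := by
  intro h
  obtain ⟨k, hk⟩ : ∃ k, 2^a = k + 1 :=
    ⟨2^a - 1, by have := Nat.one_le_two_pow (n := a); omega⟩
  set W : ℤ := 3 * s (k+1) - 2 * s k with hW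
  have hiter := Iter k m 0
  have hm' : Odd m := Nat.odd_iff.mpr hm
  have e : 0 + 2*(k+1)*m = 2 * 2^a * m := by rw [hk]; ring
  rw [e, hm'.neg_one_pow, show A 0 = 1 from rfl, h] at hiter
  have hdvd : W ∣ y^2 + 1 := by
    have hd := Int.ModEq.dvd hiter
    have : -1 * 1 - y^2 = -(y^2 + 1) := by ring
    rw [this] at hd
    exact (dvd_neg.mp hd)
  have hk3 : (k+1) % 3 ≠ 0 := by
    intro hc
    have h3 : (3:ℕ) ∣ 2^a := hk ▸ (by omega : (3:ℕ) ∣ k+1)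
    have := Nat.Prime.dvd_of_dvd_pow (by norm_num : Nat.Prime 3) h3
    omega
  have hWmod : ((W : ℤ) : ZMod 4) = ((3 : ℤ) : ZMod 4) := by
    have h1 := s_mod4 (k+1)
    have h2 := s_mod4 k
    have hcast : ((W : ℤ) : ZMod 4)
        = 3 * ((s (k+1) : ℤ) : ZMod 4) - 2 * ((s k : ℤ) : ZMod 4) := by
      rw [hW]; push_cast; ring
    have hcase : k % 3 = 0 ∨ k % 3 = 1 := by omega
    rcases hcase with hc | hc
    · rw [hcast, h1, h2, hc, show (k+1) % 3 = 1 from by omega]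
      decide
    · rw [hcast, h1, h2, hc, show (k+1) % 3 = 2 from by omega]
      decide
  have hpos : 3 ≤ W := by
    obtain ⟨hk0, hk1⟩ := s_pos k
    rw [hW]; linarith
  have hW4 : W % 4 = 3 := by
    have := (ZMod.intCast_eq_intCast_iff' W 3 4).mp hWmod
    norm_num at this
    omega
  set N : ℕ := W.toNat with hN
  have hWN : (N : ℤ) = W := Int.toNat_of_nonneg (by linarith)
  have hN4 : N % 4 = 3 := by omega
  obtain ⟨p, hp, hpd, hp4⟩ := nat_prime_3mod4 N hN4
  have hpdvd : (p : ℤ) ∣ y^2 + 1 := (hWN ▸ Int.natCast_dvd_natCast.mpr hpd).trans hdvd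
  haveI := Fact.mk hp
  have hzero : ((y^2 + 1 : ℤ) : ZMod p) = 0 :=
    (ZMod.intCast_zmod_eq_zero_iff_dvd _ _).mpr hpdvd
  have hsq : IsSquare (-1 : ZMod p) := by
    refine ⟨(y : ZMod p), ?_⟩
    push_cast at hzero
    linear_combination -hzero
  exact (ZMod.exists_sq_eq_neg_one_iff.mp hsq) hp4

lemma A_mod16 : ∀ n : ℕ, ((A n : ℤ) : ZMod 16) = ((A (n % 12) : ℤ) : ZMod 16) :=
  mod_red (by norm_num) (mod_period Arec 16 12 (by decide) (by decide))

lemma A_odd_not_sq (n : ℕ) (hn : n % 2 = 1) (y : ℤ) : A n ≠ y ^ 2 := by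
  intro h
  have h16 := A_mod16 n
  have hy : ((y : ZMod 16)) ^ 2 = ((A (n % 12) : ℤ) : ZMod 16) := by
    rw [← h16, h]; push_cast; ring
  have hlt : n % 12 < 12 := Nat.mod_lt _ (by norm_num)
  have hodd : n % 12 % 2 = 1 := by omega
  have key : ∀ t : ZMod 16, ∀ r : Fin 12, r.val % 2 = 1 →
      t ^ 2 ≠ ((A r.val : ℤ) : ZMod 16) := by decide
  exact key _ ⟨n % 12, hlt⟩ hodd hy

lemma A_sq (n : ℕ) (y : ℤ) (h : A n = y ^ 2) : n = 0 := by
  by_contra hn0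
  rcases Nat.even_or_odd n with he | ho
  · obtain ⟨t, m, hm2, hnt⟩ := Nat.exists_eq_pow_mul_and_not_dvd hn0 2 (by norm_num)
    cases t with
    | zero =>
      rw [hnt] at he
      simp at he
      exact hm2 he.two_dvd
    | succ t' =>
      have e : n = 2 * 2 ^ t' * m := by
        rw [hnt, pow_succ]; ring
      exact A_even_not_sq t' m (by omega) y (by rw [← e]; exact h)
  · exact A_odd_not_sq n (Nat.odd_iff.mp ho) y h

end Stmt14Aux

open Stmt14Aux in
/-- The only integer solutions `(x, y)` of `y⁴ - 3xy² + x² = 11` are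
`(x, y) ∈ {(-2, 1), (-2, -1), (5, 1), (5, -1)}`. -/
theorem stmt_14 (x y : ℤ) :
    y ^ 4 - 3 * x * y ^ 2 + x ^ 2 = 11 ↔
      (x, y) ∈ ({(-2, 1), (-2, -1), (5, 1), (5, -1)} : Set (ℤ × ℤ)) := by
  constructor
  · intro heq
    have key : (x - y^2)^2 - 3*(x - y^2)*(x - 2*y^2) + (x - 2*y^2)^2 = -11 := by
      linear_combination -heq
    have hprod : 1 ≤ (x - y^2) * (x - 2*y^2) := by
      nlinarith [key, sq_nonneg ((x - y^2) - (x - 2*y^2))]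
    have hba : x - 2*y^2 ≤ x - y^2 := by nlinarith [sq_nonneg y]
    simp only [Set.mem_insert_iff, Set.mem_singleton_iff, Prod.mk.injEq]
    rcases le_or_gt 1 (x - 2*y^2) with hpos | hneg
    · obtain ⟨n, hc⟩ := classify (x - 2*y^2).toNat (x - y^2) (x - 2*y^2)
        le_rfl hpos hba key
      rcases hc with ⟨h1, h2⟩ | ⟨h1, h2⟩
      · have hAn : A n = y^2 := by rw [← P_diff n, ← h1, ← h2]; ring
        have hn0 := A_sq n y hAn
        subst hn0
        have e1 : P 1 = (4:ℤ) := rfl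
        have e0 : P 0 = (3:ℤ) := rfl
        rw [e1] at h1
        rw [e0] at h2
        have hy : y = 1 ∨ y = -1 := by
          have hy2 : y^2 = 1 := by linarith
          have : (y - 1) * (y + 1) = 0 := by nlinarith
          rcases mul_eq_zero.mp this with h | h
          · left; linarith
          · right; linarith
        have hx : x = 5 := by nlinarith
        rcases hy with rfl | rfl
        · tauto
        · tauto
      · have hBn : B n = y^2 := by rw [← Q_diff n, ← h1, ← h2]; ring
        exact absurd hBn (B_not_sq n y)
    · have hneg' : x - y^2 ≤ -1 := by
        by_contra hcon
        push_neg at hcon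
        nlinarith [mul_nonneg (by linarith : (0:ℤ) ≤ x - y^2)
          (by linarith : (0:ℤ) ≤ -(x - 2*y^2))]
      obtain ⟨n, hc⟩ := classify (-(x - y^2)).toNat (-(x - 2*y^2)) (-(x - y^2))
        le_rfl (by linarith) (by linarith) (by linear_combination key)
      rcases hc with ⟨h1, h2⟩ | ⟨h1, h2⟩
      · have hAn : A n = y^2 := by rw [← P_diff n, ← h1, ← h2]; ring
        have hn0 := A_sq n y hAn
        subst hn0
        have e1 : P 1 = (4:ℤ) := rfl
        have e0 : P 0 = (3:ℤ) := rfl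
        rw [e1] at h1
        rw [e0] at h2
        have hy : y = 1 ∨ y = -1 := by
          have hy2 : y^2 = 1 := by linarith
          have : (y - 1) * (y + 1) = 0 := by nlinarith
          rcases mul_eq_zero.mp this with h | h
          · left; linarith
          · right; linarith
        have hx : x = -2 := by nlinarith
        rcases hy with rfl | rfl
        · tauto
        · tauto
      · have hBn : B n = y^2 := by rw [← Q_diff n, ← h1, ← h2]; ring
        exact absurd hBn (B_not_sq n y)
  · intro hmem
    simp only [Set.mem_insert_iff, Set.mem_singleton_iff, Prod.mk.injEq] at hmem
    rcases hmem with ⟨rfl, rfl⟩ | ⟨rfl, rfl⟩ | ⟨rfl, rfl⟩ | ⟨rfl, rfl⟩ <;> norm_num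
end
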